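/- Let r ≥ 2 and d ≥ 1 be integers and let n be an integer with n ≥ (r−1)d. For every family of points p : {0,…,n} × {1,…,r} → ℝ^d there exist weights λ : {0,…,n} → ℝ with λ ≥ 0 and ∑_i λ_i = 1, and functions g_1, …, g_r : {0,…,n} → {1,…,r} such that: (a) for every i with λ_i ≠ 0 the values g_1(i), g_2(i), …, g_r(i) are pairwise distinct; and (b) the r points ∑_{i=0}^{n} λ_i · p(i, g_k(i)) ∈ ℝ^d, for k = 1, …, r, are all equal. -/

import Mathlib

open Finset

variable {E : Type*} [NormedAddCommGroup E] [InnerProductSpace ℝ E]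

/-- Moving from `z` towards `x` decreases the norm when `⟪z, x - z⟫ < 0`. -/
lemma seg_min_aux {z x : E} (h : @inner ℝ _ _ z (x - z) < 0) :
    ∃ t : ℝ, 0 ≤ t ∧ t ≤ 1 ∧ ‖z + t • (x - z)‖ < ‖z‖ := by
  set q : ℝ := @inner ℝ _ _ z (x - z) with hq
  have hxz : x - z ≠ 0 := by
    intro h0
    rw [hq, h0, inner_zero_right] at h
    exact lt_irrefl 0 h
  set B : ℝ := ‖x - z‖ ^ 2 with hB
  have hBpos : 0 < B := by
    have := norm_pos_iff.mpr hxz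
    positivity
  set t : ℝ := min 1 (-q / B) with ht
  have ht0 : 0 < t := lt_min one_pos (div_pos (by linarith) hBpos)
  have ht1 : t ≤ 1 := min_le_left _ _
  have htB : t * B ≤ -q := by
    have h2 : t ≤ -q / B := min_le_right _ _
    calc t * B ≤ (-q / B) * B := by nlinarith
    _ = -q := by field_simp
  refine ⟨t, ht0.le, ht1, ?_⟩
  have hns : ‖z + t • (x - z)‖ ^ 2 = ‖z‖ ^ 2 + 2 * (t * q) + t ^ 2 * B := by
    rw [@norm_add_sq_real, real_inner_smul_right, norm_smul, mul_pow, hB]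
    simp [Real.norm_eq_abs, sq_abs]
    exact Or.inl hq.symm
  nlinarith [norm_nonneg (z + t • (x - z)), norm_nonneg z, hns, ht0, h]

lemma exists_inner_nonpos {z : E} {κ : Type*} (f : κ → E)
    (hf : (0 : E) ∈ convexHull ℝ (Set.range f)) : ∃ k, @inner ℝ _ _ z (f k) ≤ 0 := by
  by_contra hk
  push_neg at hk
  have hC : Convex ℝ {x : E | 0 < @inner ℝ _ _ z x} := by
    apply convex_halfSpace_gt (f := fun x => @inner ℝ _ _ z x)
    exact ⟨fun a b => inner_add_right z a b, fun c x => real_inner_smul_right z x c⟩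
  have : (0 : E) ∈ {x : E | 0 < @inner ℝ _ _ z x} := by
    refine convexHull_min ?_ hC hf
    rintro x ⟨k, rfl⟩
    exact hk k
  simp at this

lemma colorful_caratheodory [FiniteDimensional ℝ E] {n : ℕ}
    (hdim : Module.finrank ℝ E ≤ n)
    {κ : Type*} [Fintype κ] [Nonempty κ] (v : Fin (n + 1) → κ → E)
    (hv : ∀ i, (0 : E) ∈ convexHull ℝ (Set.range (v i))) :
    ∃ (c : Fin (n + 1) → κ) (w : Fin (n + 1) → ℝ),
      (∀ i, 0 ≤ w i) ∧ (∑ i, w i = 1) ∧ ∑ i, w i • v i (c i) = 0 := by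
  classical
  set Δ : Set (Fin (n+1) → ℝ) := stdSimplex ℝ (Fin (n+1)) with hΔdef
  set φ : (Fin (n+1) → κ) → (Fin (n+1) → ℝ) → E := fun c w => ∑ i, w i • v i (c i) with hφdef
  have hφ_comb : ∀ c (a b : ℝ) (wa wb : Fin (n+1) → ℝ),
      φ c (a • wa + b • wb) = a • φ c wa + b • φ c wb := by
    intro c a b wa wb
    simp only [hφdef, Pi.add_apply, Pi.smul_apply, smul_eq_mul, add_smul, mul_smul]
    rw [Finset.sum_add_distrib, ← Finset.smul_sum, ← Finset.smul_sum]
  have hφ_single : ∀ c j, φ c (Pi.single j (1:ℝ)) = v j (c j) := by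
    intro c j
    simp only [hφdef]
    rw [Finset.sum_eq_single j]
    · simp
    · intro b _ hb; simp [Pi.single_eq_of_ne hb]
    · simp
  -- minimizer over the simplex for each coloring
  have hmin : ∀ c : Fin (n+1) → κ, ∃ w ∈ Δ, ∀ w' ∈ Δ, ‖φ c w‖ ≤ ‖φ c w'‖ := by
    intro c
    have hc : Continuous fun w => ‖φ c w‖ := by
      apply Continuous.norm
      exact continuous_finset_sum _ fun i _ => ((continuous_apply i).smul continuous_const)
    obtain ⟨w, hwΔ, hw⟩ := (isCompact_stdSimplex ℝ (Fin (n+1))).exists_isMinOn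
      ⟨Pi.single 0 1, single_mem_stdSimplex ℝ 0⟩ hc.continuousOn
    exact ⟨w, hwΔ, fun w' hw' => hw hw'⟩
  choose wm hwmΔ hwm using hmin
  obtain ⟨c₀, hc₀⟩ := Finite.exists_min fun c => ‖φ c (wm c)‖
  set w₀ := wm c₀ with hw₀def
  set z := φ c₀ w₀ with hzdef
  have hglob : ∀ c w, w ∈ Δ → ‖z‖ ≤ ‖φ c w‖ := fun c w hw =>
    le_trans (hc₀ c) (hwm c w hw)
  -- it suffices to show z = 0
  have hw₀Δ : w₀ ∈ Δ := hwmΔ c₀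
  refine ⟨c₀, w₀, hw₀Δ.1, hw₀Δ.2, ?_⟩
  by_contra hz
  have hz' : z ≠ 0 := hz
  have hz2 : (0:ℝ) < ‖z‖ ^ 2 := by
    have := norm_pos_iff.mpr hz'
    positivity
  -- Step A: every point of the configuration has inner product ≥ ‖z‖² with z
  have hA : ∀ j, ‖z‖ ^ 2 ≤ @inner ℝ _ _ z (v j (c₀ j)) := by
    intro j
    by_contra hj
    push_neg at hj
    have hneg : @inner ℝ _ _ z (v j (c₀ j) - z) < 0 := by
      rw [inner_sub_right, real_inner_self_eq_norm_sq]
      linarith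
    obtain ⟨t, ht0, ht1, hlt⟩ := seg_min_aux hneg
    have hmem : (1 - t) • w₀ + t • (Pi.single j 1 : Fin (n+1) → ℝ) ∈ Δ :=
      (convex_stdSimplex ℝ (Fin (n+1))) hw₀Δ (single_mem_stdSimplex ℝ j)
        (by linarith) ht0 (by ring)
    have hge := hglob c₀ _ hmem
    rw [hφ_comb, hφ_single] at hge
    have heq : (1 - t) • φ c₀ w₀ + t • v j (c₀ j) = z + t • (v j (c₀ j) - z) := by
      rw [← hzdef, smul_sub, sub_smul, one_smul]; abel
    rw [heq] at hge
    exact absurd hlt (not_lt.mpr hge)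
  -- Step A': equality on the support of w₀
  have hA' : ∀ i, w₀ i ≠ 0 → @inner ℝ _ _ z (v i (c₀ i)) = ‖z‖ ^ 2 := by
    have hsum : ∑ i, w₀ i * @inner ℝ _ _ z (v i (c₀ i)) = ‖z‖ ^ 2 := by
      have h1 : @inner ℝ _ _ z (∑ i, w₀ i • v i (c₀ i)) =
          ∑ i, w₀ i * @inner ℝ _ _ z (v i (c₀ i)) := by
        simp only [inner_sum, real_inner_smul_right]
      have h2 : z = ∑ i, w₀ i • v i (c₀ i) := hzdef
      rw [← h1, ← h2, real_inner_self_eq_norm_sq]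
    have hzero : ∑ i, w₀ i * (@inner ℝ _ _ z (v i (c₀ i)) - ‖z‖ ^ 2) = 0 := by
      simp only [mul_sub, Finset.sum_sub_distrib, hsum, ← Finset.sum_mul, hw₀Δ.2, one_mul,
        sub_self]
    intro i hi
    have := (Finset.sum_eq_zero_iff_of_nonneg (fun i _ =>
      mul_nonneg (hw₀Δ.1 i) (by linarith [hA i]))).mp hzero i (Finset.mem_univ i)
    rcases mul_eq_zero.mp this with h | h
    · exact absurd h hi
    · linarith
  -- Step B: z is in the convex hull of the support points
  have hB : z ∈ convexHull ℝ ((fun i => v i (c₀ i)) '' {i | w₀ i ≠ 0}) := by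
    have hmem := Finset.centerMass_mem_convexHull
      (s := (fun i => v i (c₀ i)) '' {i | w₀ i ≠ 0})
      (Finset.univ.filter fun i => w₀ i ≠ 0)
      (fun i _ => hw₀Δ.1 i)
      (by rw [Finset.sum_filter_ne_zero, hw₀Δ.2]; exact one_pos)
      (z := fun i => v i (c₀ i)) (fun i hi => ⟨i, (Finset.mem_filter.mp hi).2, rfl⟩)
    rw [Finset.centerMass_eq_of_sum_1 _ _ (by rw [Finset.sum_filter_ne_zero, hw₀Δ.2]),
      Finset.sum_filter_of_ne (fun i _ h => by
        intro h0; apply h; rw [h0, zero_smul])] at hmem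
    have h2 : z = ∑ i, w₀ i • v i (c₀ i) := hzdef
    rwa [← h2] at hmem
  -- Step C: Carathéodory with affine independence
  obtain ⟨ι, hι, zf, wt, hrange, hai, hwt, hwt1, hwtz⟩ :=
    eq_pos_convex_span_of_mem_convexHull hB
  have hιne : Nonempty ι := by
    rcases isEmpty_or_nonempty ι with h | h
    · rw [Finset.sum_of_isEmpty] at hwt1
      exact absurd hwt1 (by norm_num)
    · exact h
  have hrange' : ∀ a : ι, ∃ i, w₀ i ≠ 0 ∧ v i (c₀ i) = zf a := by
    intro a
    obtain ⟨i, hi, hie⟩ := hrange ⟨a, rfl⟩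
    exact ⟨i, hi, hie⟩
  -- cardinality bound
  have hcard : Fintype.card ι ≤ n := by
    have hm : 1 ≤ Fintype.card ι := Fintype.card_pos
    set f : E →ₗ[ℝ] ℝ :=
      { toFun := fun x => @inner ℝ _ _ z x
        map_add' := fun a b => inner_add_right z a b
        map_smul' := fun c x => real_inner_smul_right z x c } with hfdef
    have hyp : ∀ a : ι, @inner ℝ _ _ z (zf a) = ‖z‖ ^ 2 := by
      intro a
      obtain ⟨i, hi, hie⟩ := hrange' a
      rw [← hie]; exact hA' i hi
    have hker : vectorSpan ℝ (Set.range zf) ≤ LinearMap.ker f := by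
      rw [vectorSpan_def, Submodule.span_le]
      rintro u ⟨x, hx, y, hy, rfl⟩
      obtain ⟨a, rfl⟩ := hx
      obtain ⟨b, rfl⟩ := hy
      simp only [SetLike.mem_coe, LinearMap.mem_ker, vsub_eq_sub, map_sub]
      show @inner ℝ _ _ z (zf a) - @inner ℝ _ _ z (zf b) = 0
      rw [hyp a, hyp b, sub_self]
    have hfv : Module.finrank ℝ (vectorSpan ℝ (Set.range zf)) = Fintype.card ι - 1 :=
      hai.finrank_vectorSpan (by omega)
    have hker_lt : LinearMap.ker f < ⊤ := by
      rw [lt_top_iff_ne_top]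
      intro htop
      have hzk : z ∈ LinearMap.ker f := htop ▸ Submodule.mem_top
      rw [LinearMap.mem_ker] at hzk
      have : @inner ℝ _ _ z z = 0 := hzk
      rw [real_inner_self_eq_norm_sq] at this
      linarith
    have h1 : Module.finrank ℝ (vectorSpan ℝ (Set.range zf)) ≤
        Module.finrank ℝ (LinearMap.ker f) :=
      Submodule.finrank_mono hker
    have h2 : Module.finrank ℝ (LinearMap.ker f) < Module.finrank ℝ E :=
      Submodule.finrank_lt hker_lt.ne
    omega
  -- Step D: reindex the representation to avoid some index j₀
  choose pick hpick1 hpick2 using hrange'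
  have hpickinj : Function.Injective pick := by
    intro a b hab
    apply hai.injective
    rw [← hpick2 a, ← hpick2 b, hab]
  have hJne : ∃ j₀, j₀ ∉ Finset.univ.image pick := by
    by_contra hall
    push_neg at hall
    have hsub : Finset.univ ⊆ Finset.univ.image pick := fun j _ => hall j
    have hle := Finset.card_le_card hsub
    rw [Finset.card_univ, Fintype.card_fin,
      Finset.card_image_of_injective _ hpickinj, Finset.card_univ] at hle
    omega
  obtain ⟨j₀, hj₀⟩ := hJne
  set w' : Fin (n+1) → ℝ := fun i => ∑ a ∈ Finset.univ.filter (fun a => pick a = i), wt a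
    with hw'def
  have hw'0 : ∀ i, 0 ≤ w' i := fun i => Finset.sum_nonneg fun a _ => (hwt a).le
  have hw'sum : ∑ i, w' i = 1 := by
    have h0 : ∑ i, w' i = ∑ i, ∑ a ∈ Finset.univ.filter (fun a => pick a = i), wt a := rfl
    rw [h0, Finset.sum_fiberwise_of_maps_to (fun a _ => Finset.mem_univ (pick a)), hwt1]
  have hw'Δ : w' ∈ Δ := ⟨hw'0, hw'sum⟩
  have hw'j₀ : w' j₀ = 0 := by
    have hemp : Finset.univ.filter (fun a => pick a = j₀) = ∅ := by
      rw [Finset.filter_eq_empty_iff]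
      intro a _ ha
      exact hj₀ (Finset.mem_image.mpr ⟨a, Finset.mem_univ a, ha⟩)
    show ∑ a ∈ Finset.univ.filter (fun a => pick a = j₀), wt a = 0
    rw [hemp, Finset.sum_empty]
  have hφw' : φ c₀ w' = z := by
    simp only [hφdef]
    calc ∑ i, w' i • v i (c₀ i)
        = ∑ i, ∑ a ∈ Finset.univ.filter (fun a => pick a = i), wt a • v i (c₀ i) := by
          refine Finset.sum_congr rfl fun i _ => ?_
          show (∑ a ∈ Finset.univ.filter (fun a => pick a = i), wt a) • v i (c₀ i) = _
          rw [Finset.sum_smul]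
      _ = ∑ i, ∑ a ∈ Finset.univ.filter (fun a => pick a = i), wt a • zf a := by
          refine Finset.sum_congr rfl fun i _ => Finset.sum_congr rfl fun a ha => ?_
          have hpa : pick a = i := (Finset.mem_filter.mp ha).2
          rw [← hpa, hpick2 a]
      _ = ∑ a, wt a • zf a :=
          Finset.sum_fiberwise_of_maps_to (fun a _ => Finset.mem_univ (pick a)) _
      _ = z := hwtz
  -- Step E: swap the color at j₀
  obtain ⟨k₀, hk₀⟩ := exists_inner_nonpos (z := z) (v j₀) (hv j₀)
  have hneg : @inner ℝ _ _ z (v j₀ k₀ - z) < 0 := by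
    rw [inner_sub_right, real_inner_self_eq_norm_sq]; linarith
  obtain ⟨t, ht0, ht1, hlt⟩ := seg_min_aux hneg
  set c' : Fin (n+1) → κ := Function.update c₀ j₀ k₀ with hc'def
  have hφc'w' : φ c' w' = z := by
    have hcongr : φ c' w' = φ c₀ w' := by
      simp only [hφdef]
      refine Finset.sum_congr rfl fun i _ => ?_
      by_cases hij : i = j₀
      · subst hij; rw [hw'j₀, zero_smul, zero_smul]
      · rw [hc'def, Function.update_of_ne hij]
    rw [hcongr, hφw']
  have hsingle : φ c' (Pi.single j₀ 1) = v j₀ k₀ := by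
    rw [hφ_single, hc'def, Function.update_self]
  have hmem : (1 - t) • w' + t • (Pi.single j₀ 1 : Fin (n+1) → ℝ) ∈ Δ :=
    (convex_stdSimplex ℝ (Fin (n+1))) hw'Δ (single_mem_stdSimplex ℝ j₀)
      (by linarith) ht0 (by ring)
  have hge := hglob c' _ hmem
  rw [hφ_comb, hφc'w', hsingle] at hge
  have heq : (1 - t) • z + t • v j₀ k₀ = z + t • (v j₀ k₀ - z) := by
    rw [smul_sub, sub_smul, one_smul]; abel
  rw [heq] at hge
  exact absurd hlt (not_lt.mpr hge)

theorem soberon_equal_barycentric (r d n : ℕ) (hr : 2 ≤ r) (hd : 1 ≤ d)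
    (hn : (r - 1) * d ≤ n) (p : Fin (n + 1) → Fin r → (Fin d → ℝ)) :
    ∃ lam : Fin (n + 1) → ℝ, (∀ i, 0 ≤ lam i) ∧ (∑ i, lam i = 1) ∧
      ∃ g : Fin r → Fin (n + 1) → Fin r,
        (∀ i, lam i ≠ 0 → Function.Injective fun k => g k i) ∧
        (∀ k l : Fin r, ∑ i, lam i • p i (g k i) = ∑ i, lam i • p i (g l i)) := by
  obtain ⟨s, rfl⟩ : ∃ s, r = s + 2 := ⟨r - 2, by omega⟩
  classical
  set v : Fin (n+1) → Fin (s+2) → EuclideanSpace ℝ (Fin (s+1) × Fin d) := fun i c =>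
    WithLp.toLp 2 (fun kt : Fin (s+1) × Fin d => p i (kt.1.succ + c) kt.2 - p i (kt.1.castSucc + c) kt.2) with hvdef
  have hvsum : ∀ i, ∑ c, v i c = 0 := by
    intro i
    ext kt
    rw [WithLp.ofLp_sum, Finset.sum_apply]
    have h1 : ∀ (a : Fin (s+2)), ∑ c : Fin (s+2), p i (a + c) kt.2 = ∑ j, p i j kt.2 := by
      intro a
      exact Fintype.sum_equiv (Equiv.addLeft a) _ _ (fun c => rfl)
    have : ∑ c : Fin (s+2), v i c kt =
        ∑ c : Fin (s+2), (p i (kt.1.succ + c) kt.2 - p i (kt.1.castSucc + c) kt.2) := rfl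
    rw [this, Finset.sum_sub_distrib, h1, h1, sub_self]
    rfl
  have hv : ∀ i, (0 : EuclideanSpace ℝ (Fin (s+1) × Fin d)) ∈
      convexHull ℝ (Set.range (v i)) := by
    intro i
    have hpos : (0:ℝ) < ∑ _c : Fin (s+2), (1:ℝ) := by
      simp only [Finset.sum_const, Finset.card_univ, Fintype.card_fin, nsmul_eq_mul, mul_one]
      positivity
    have hmem := Finset.centerMass_mem_convexHull (s := Set.range (v i))
      (Finset.univ : Finset (Fin (s+2))) (w := fun _ => (1:ℝ)) (fun _ _ => zero_le_one)
      hpos (z := v i) (fun c _ => ⟨c, rfl⟩)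
    rw [Finset.centerMass] at hmem
    simp only [one_smul] at hmem
    rwa [hvsum i, smul_zero] at hmem
  have hdim : Module.finrank ℝ (EuclideanSpace ℝ (Fin (s+1) × Fin d)) ≤ n := by
    rw [finrank_euclideanSpace, Fintype.card_prod, Fintype.card_fin, Fintype.card_fin]
    have : s + 2 - 1 = s + 1 := rfl
    rwa [this] at hn
  obtain ⟨c, w, hw0, hw1, hwv⟩ := colorful_caratheodory hdim v hv
  have hblk : ∀ (k : Fin (s+1)),
      (∑ i, w i • p i (k.succ + c i)) = ∑ i, w i • p i (k.castSucc + c i) := by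
    intro k
    funext t
    have h0 : ∑ i, (w i • v i (c i)) (k, t) = 0 := by
      have := congrArg (fun x => x (k, t)) hwv
      rw [WithLp.ofLp_sum, Finset.sum_apply] at this
      exact this
    have h1 : ∑ i, w i * (p i (k.succ + c i) t - p i (k.castSucc + c i) t) = 0 :=
      (Finset.sum_congr rfl fun i _ => rfl).trans h0
    rw [Finset.sum_apply, Finset.sum_apply]
    simp only [Pi.smul_apply, smul_eq_mul]
    simp only [mul_sub] at h1
    rw [Finset.sum_sub_distrib] at h1
    linarith [h1]
  have hF : ∀ a : Fin (s+2), (∑ i, w i • p i (a + c i)) = ∑ i, w i • p i (0 + c i) := by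
    have key : ∀ (m : ℕ) (hm : m < s + 2),
        (∑ i, w i • p i (⟨m, hm⟩ + c i)) = ∑ i, w i • p i (0 + c i) := by
      intro m
      induction m with
      | zero => intro hm; rfl
      | succ m ih =>
        intro hm
        have hm' : m < s + 1 := by omega
        have hsucc : (Fin.succ ⟨m, hm'⟩ : Fin (s+2)) = ⟨m + 1, hm⟩ := rfl
        have hcast : (Fin.castSucc ⟨m, hm'⟩ : Fin (s+2)) = ⟨m, by omega⟩ := rfl
        calc (∑ i, w i • p i (⟨m + 1, hm⟩ + c i))
            = ∑ i, w i • p i ((Fin.succ ⟨m, hm'⟩ : Fin (s+2)) + c i) := by rw [hsucc]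
          _ = ∑ i, w i • p i ((Fin.castSucc ⟨m, hm'⟩ : Fin (s+2)) + c i) := hblk ⟨m, hm'⟩
          _ = ∑ i, w i • p i (⟨m, by omega⟩ + c i) := by rw [hcast]
          _ = ∑ i, w i • p i (0 + c i) := ih (by omega)
    intro a
    exact key a.1 a.2
  refine ⟨w, hw0, hw1, fun k i => k + c i, ?_, ?_⟩
  · intro i _ a b hab
    simpa using congrArg (fun x => x - c i) hab
  · intro k l
    rw [hF k, hF l]
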